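/- Let P be an exponentially localized orthogonal projection on L²(ℝ²) with kernel bound |P(x,y)| ≤ C e^{−β‖x−y‖}, and let {w_{γ,a}}_{γ∈𝔇, 1≤a≤m(γ)} be a generalized Wannier basis for P, G-localized around an r-uniformly discrete set 𝔇 ⊂ ℝ², with localization function G(‖x‖) = e^{2α‖x‖} for some 0 < α < β. Then for each i ∈ {1,2} and each x, y ∈ ℝ² the series Γ_i(x,y) = ∑_{γ∈𝔇} ∑_{1≤a≤m(γ)} γ_i w_{γ,a}(x) conj(w_{γ,a}(y)) converges absolutely, and there exist constants C₀, C₀' > 0 and 0 < β' < α such that |Γ_i(x,y)| ≤ C₀ e^{−β'‖x−y‖} + C₀' |x_i| e^{−β'‖x−y‖} for all x, y ∈ ℝ². -/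

import Mathlib

open MeasureTheory Filter Topology

noncomputable section

abbrev R2 : Type := EuclideanSpace ℝ (Fin 2)

abbrev H2 : Type := MeasureTheory.Lp ℂ 2 (volume : Measure R2)

/-- `T` is an integral operator with kernel `k`. -/
def HasKernel (T : H2 →L[ℂ] H2) (k : R2 → R2 → ℂ) : Prop :=
  ∀ f : H2, ∀ᵐ x : R2 ∂volume, (T f : R2 → ℂ) x = ∫ y : R2, k x y * (f : R2 → ℂ) y

/-- `P` is an orthogonal projection. -/
def IsOrthProj (P : H2 →L[ℂ] H2) : Prop := IsSelfAdjoint P ∧ P ∘L P = P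

/-- `p` is a jointly continuous, exponentially localized kernel with constants `C`, `β`. -/
def IsExpLocKernel (p : R2 → R2 → ℂ) (C β : ℝ) : Prop :=
  Continuous (fun q : R2 × R2 => p q.1 q.2) ∧ 0 < C ∧ 0 < β ∧
    ∀ x y : R2, ‖p x y‖ ≤ C * Real.exp (-β * ‖x - y‖)

/-- Hilbert-Schmidt operators on `L²(ℝ²)`. -/
def IsHilbertSchmidt (T : H2 →L[ℂ] H2) : Prop :=
  ∃ (w : Set H2) (b : HilbertBasis w ℂ H2), Summable fun i => ‖T (b i)‖ ^ 2

/-- Trace class operators, characterized as products of two Hilbert-Schmidt operators. -/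
def IsTraceClass (T : H2 →L[ℂ] H2) : Prop :=
  ∃ A B : H2 →L[ℂ] H2, IsHilbertSchmidt A ∧ IsHilbertSchmidt B ∧ T = A ∘L B

def traceBasisIdx : Set H2 := (exists_hilbertBasis ℂ H2).choose

def traceBasis : HilbertBasis traceBasisIdx ℂ H2 := (exists_hilbertBasis ℂ H2).choose_spec.choose

/-- The trace of an operator, computed in a fixed Hilbert basis of `L²(ℝ²)`.
For trace class operators this is the canonical trace for any choice of basis. -/
def opTrace (T : H2 →L[ℂ] H2) : ℂ :=
  ∑' i : traceBasisIdx, (inner ℂ (traceBasis i) (T (traceBasis i)) : ℂ)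

/-- The square `Λ_L = [-L, L]²` in `ℝ²`. -/
def Lam (L : ℝ) : Set R2 := {x : R2 | |x 0| ≤ L ∧ |x 1| ≤ L}

/-- The characteristic function of `Λ_L`, with values in `ℂ`. -/
def indL (L : ℝ) (x : R2) : ℂ := (Lam L).indicator (fun _ => (1 : ℂ)) x

/-- Formal composition of two integral kernels. -/
def kComp (k₁ k₂ : R2 → R2 → ℂ) : R2 → R2 → ℂ := fun x y => ∫ z : R2, k₁ x z * k₂ z y

/-- The kernel of the commutator `[X_i, P]`, when `P` has kernel `p`. -/
def commK (p : R2 → R2 → ℂ) (i : Fin 2) : R2 → R2 → ℂ :=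
  fun x y => ((x i - y i : ℝ) : ℂ) * p x y

/-- The kernel of the double commutator `[[X₁,P],[X₂,P]]`, when `P` has kernel `p`. -/
def dcommK (p : R2 → R2 → ℂ) : R2 → R2 → ℂ :=
  fun x y => kComp (commK p 0) (commK p 1) x y - kComp (commK p 1) (commK p 0) x y

/-- The kernel of `i χ_{Λ_L} P [[X₁,P],[X₂,P]] P χ_{Λ_L}`, when `P` has kernel `p`. -/
def chernK (p : R2 → R2 → ℂ) (L : ℝ) : R2 → R2 → ℂ :=
  fun x y => indL L x * (Complex.I * kComp p (kComp (dcommK p) p) x y) * indL L y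

/-- A set `𝔇 ⊆ ℝ²` is `r`-uniformly discrete. -/
def UnifDiscrete (𝔇 : Set R2) (r : ℝ) : Prop :=
  0 < r ∧ ∀ x : R2, (𝔇 ∩ Metric.ball x r).Subsingleton

/-- The index set of a generalized Wannier basis. -/
abbrev WIdx (𝔇 : Set R2) (m : R2 → ℕ) : Type := Σ γ : 𝔇, Fin (m (γ : R2))

/-- `w` is a generalized Wannier basis for `P`, `G`-localized around `𝔇`
with localization constant `M` and uniform multiplicity bound `mStar`. -/
def IsGWB (P : H2 →L[ℂ] H2) (𝔇 : Set R2) (m : R2 → ℕ) (mStar : ℕ)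
    (w : (γ : R2) → Fin (m γ) → H2) (G : ℝ → ℝ) (M : ℝ) : Prop :=
  (∀ γ ∈ 𝔇, m γ ≤ mStar) ∧
  Orthonormal ℂ (fun σ : WIdx 𝔇 m => w (σ.1 : R2) σ.2) ∧
  (∀ γ ∈ 𝔇, ∀ a, P (w γ a) = w γ a) ∧
  (∀ f : H2, P f = f → (∀ (γ : R2), γ ∈ 𝔇 → ∀ a, (inner ℂ (w γ a) f : ℂ) = 0) → f = 0) ∧
  (∀ γ ∈ 𝔇, ∀ a, ∫⁻ x : R2,
      (‖(w γ a : R2 → ℂ) x‖₊ : ENNReal) ^ 2 * ENNReal.ofReal (G ‖x - γ‖)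
      ≤ ENNReal.ofReal M)

/-- The Japanese bracket `⟨x⟩ = (1+‖x‖²)^{1/2}` on `ℝ²`. -/
def jap (x : R2) : ℝ := Real.sqrt (1 + ‖x‖ ^ 2)

/-- The Japanese bracket `⟨t⟩ = (1+t²)^{1/2}` on `ℝ`. -/
def japR (t : ℝ) : ℝ := Real.sqrt (1 + t ^ 2)


section AuxStatement7

private lemma aux_coord_le (v : R2) (i : Fin 2) : |v i| ≤ ‖v‖ := by
  rw [EuclideanSpace.norm_eq, ← Real.sqrt_sq (abs_nonneg (v i))]
  apply Real.sqrt_le_sqrt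
  rw [sq_abs]
  fin_cases i <;>
    · simp only [Fin.sum_univ_two, Real.norm_eq_abs, sq_abs, Fin.mk_zero, Fin.mk_one]
      nlinarith [sq_nonneg (v 0), sq_nonneg (v 1)]

private lemma aux_sum_nat (a : ℝ) (ha : 0 < a) : Summable (fun n : ℕ => Real.exp (-a * n)) := by
  have h : (fun n : ℕ => Real.exp (-a * n)) = fun n : ℕ => Real.exp (-a) ^ n := by
    funext n; rw [← Real.exp_nat_mul]; congr 1; ring
  rw [h]
  exact summable_geometric_of_lt_one (Real.exp_pos _).le (Real.exp_lt_one_iff.2 (by linarith))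

private lemma aux_sum_int (a : ℝ) (ha : 0 < a) :
    Summable (fun k : ℤ => Real.exp (-a * |(k : ℝ)|)) := by
  apply Summable.of_nat_of_neg
  · simpa using aux_sum_nat a ha
  · simpa using aux_sum_nat a ha

private lemma aux_zsum (a : ℝ) (ha : 0 < a) :
    ∃ A : ℝ, 0 < A ∧ ∀ t : ℝ,
      Summable (fun k : ℤ => Real.exp (-a * |t - (k : ℝ)|)) ∧
      ∑' k : ℤ, Real.exp (-a * |t - (k : ℝ)|) ≤ A := by
  refine ⟨Real.exp a * ∑' k : ℤ, Real.exp (-a * |(k : ℝ)|), ?_, fun t => ?_⟩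
  · exact mul_pos (Real.exp_pos _)
      (Summable.tsum_pos (aux_sum_int a ha) (fun k => (Real.exp_pos _).le) 0 (Real.exp_pos _))
  · set k₀ : ℤ := ⌊t⌋ with hk₀
    have hbd : ∀ k : ℤ, Real.exp (-a * |t - (k : ℝ)|) ≤
        Real.exp a * Real.exp (-a * |((k - k₀ : ℤ) : ℝ)|) := by
      intro k
      rw [← Real.exp_add]
      apply Real.exp_le_exp.2
      have h1 : (k₀ : ℝ) ≤ t := Int.floor_le t
      have h2 : t < k₀ + 1 := Int.lt_floor_add_one t
      have h3 : |((k - k₀ : ℤ) : ℝ)| ≤ |t - (k : ℝ)| + 1 := by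
        push_cast
        calc |(k : ℝ) - k₀| ≤ |(k : ℝ) - t| + |t - k₀| := abs_sub_le _ t _
          _ ≤ |t - (k : ℝ)| + 1 := by
              rw [abs_sub_comm]
              have h4 : |t - (k₀ : ℝ)| ≤ 1 := by
                rw [abs_of_nonneg (by linarith)]; linarith
              linarith
      have h5 := mul_le_mul_of_nonneg_left h3 ha.le
      linarith
    have hs2 : Summable (fun k : ℤ => Real.exp a * Real.exp (-a * |((k - k₀ : ℤ) : ℝ)|)) := by
      apply Summable.mul_left
      exact (aux_sum_int a ha).comp_injective (Equiv.subRight k₀).injective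
    have hs1 : Summable (fun k : ℤ => Real.exp (-a * |t - (k : ℝ)|)) :=
      Summable.of_nonneg_of_le (fun k => (Real.exp_pos _).le) hbd hs2
    refine ⟨hs1, ?_⟩
    calc ∑' k : ℤ, Real.exp (-a * |t - (k : ℝ)|)
        ≤ ∑' k : ℤ, Real.exp a * Real.exp (-a * |((k - k₀ : ℤ) : ℝ)|) :=
          Summable.tsum_le_tsum hbd hs1 hs2
      _ = Real.exp a * ∑' k : ℤ, Real.exp (-a * |((k - k₀ : ℤ) : ℝ)|) := tsum_mul_left
      _ = Real.exp a * ∑' k : ℤ, Real.exp (-a * |(k : ℝ)|) := by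
          congr 1
          exact (Equiv.subRight k₀).tsum_eq fun k : ℤ => Real.exp (-a * |(k : ℝ)|)

private lemma aux_grid (c r : ℝ) (hc : 0 < c) (hr : 0 < r) (𝔇 : Set R2)
    (hsep : ∀ γ ∈ 𝔇, ∀ γ' ∈ 𝔇, dist γ γ' < r → γ = γ') :
    ∃ A : ℝ, 0 < A ∧ ∀ x : R2,
      Summable (fun γ : 𝔇 => Real.exp (-c * ‖x - (γ : R2)‖)) ∧
      ∑' γ : 𝔇, Real.exp (-c * ‖x - (γ : R2)‖) ≤ A := by
  set s : ℝ := r / 2 with hs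
  have hs0 : 0 < s := by positivity
  obtain ⟨A₁, hA₁pos, hA₁⟩ := aux_zsum (c / 2 * s) (by positivity)
  refine ⟨Real.exp (c * s) * (A₁ * A₁), by positivity, fun x => ?_⟩
  have key1 : ∀ t : ℝ, (fun k : ℤ => Real.exp (-(c / 2) * |t - (k : ℝ) * s|)) =
      fun k : ℤ => Real.exp (-(c / 2 * s) * |t / s - (k : ℝ)|) := by
    intro t; funext k
    congr 1
    have h1 : |t - (k : ℝ) * s| = s * |t / s - (k : ℝ)| := by
      rw [show t - (k : ℝ) * s = s * (t / s - (k : ℝ)) by field_simp, abs_mul, abs_of_pos hs0]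
    rw [h1]; ring
  set u : ℤ → ℝ := fun k => Real.exp (-(c / 2) * |x 0 - (k : ℝ) * s|) with hu
  set v : ℤ → ℝ := fun k => Real.exp (-(c / 2) * |x 1 - (k : ℝ) * s|) with hv
  have hsu : Summable u := by rw [hu, key1]; exact (hA₁ _).1
  have hsv : Summable v := by rw [hv, key1]; exact (hA₁ _).1
  have htu : ∑' k, u k ≤ A₁ := by rw [hu, key1]; exact (hA₁ _).2
  have htv : ∑' k, v k ≤ A₁ := by rw [hv, key1]; exact (hA₁ _).2
  set φ : 𝔇 → ℤ × ℤ := fun γ => (⌊(γ : R2) 0 / s⌋, ⌊(γ : R2) 1 / s⌋) with hφ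
  have hfl : ∀ t : ℝ, 0 ≤ t - (⌊t / s⌋ : ℝ) * s ∧ t - (⌊t / s⌋ : ℝ) * s < s := by
    intro t
    have h1 : (⌊t / s⌋ : ℝ) ≤ t / s := Int.floor_le _
    have h2 : t / s < ⌊t / s⌋ + 1 := Int.lt_floor_add_one _
    have h3 : t / s * s = t := div_mul_cancel₀ t hs0.ne'
    constructor
    · nlinarith [mul_le_mul_of_nonneg_right h1 hs0.le]
    · nlinarith [mul_lt_mul_of_pos_right h2 hs0]
  have hφinj : Function.Injective φ := by
    intro γ γ' h
    have h0 : ⌊(γ : R2) 0 / s⌋ = ⌊(γ' : R2) 0 / s⌋ := congrArg Prod.fst h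
    have h1 : ⌊(γ : R2) 1 / s⌋ = ⌊(γ' : R2) 1 / s⌋ := congrArg Prod.snd h
    have d0 : |(γ : R2) 0 - (γ' : R2) 0| < s := by
      have a1 := hfl ((γ : R2) 0); have a2 := hfl ((γ' : R2) 0)
      rw [h0] at a1
      rw [abs_lt]
      constructor
      · linarith [a1.1, a1.2, a2.1, a2.2]
      · linarith [a1.1, a1.2, a2.1, a2.2]
    have d1 : |(γ : R2) 1 - (γ' : R2) 1| < s := by
      have a1 := hfl ((γ : R2) 1); have a2 := hfl ((γ' : R2) 1)
      rw [h1] at a1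
      rw [abs_lt]
      constructor
      · linarith [a1.1, a1.2, a2.1, a2.2]
      · linarith [a1.1, a1.2, a2.1, a2.2]
    have hdist : dist (γ : R2) (γ' : R2) < r := by
      rw [EuclideanSpace.dist_eq, Real.sqrt_lt' hr, Fin.sum_univ_two, Real.dist_eq, Real.dist_eq]
      have e0 : |(γ : R2) 0 - (γ' : R2) 0| ^ 2 < s ^ 2 := by
        nlinarith [abs_nonneg ((γ : R2) 0 - (γ' : R2) 0)]
      have e1 : |(γ : R2) 1 - (γ' : R2) 1| ^ 2 < s ^ 2 := by
        nlinarith [abs_nonneg ((γ : R2) 1 - (γ' : R2) 1)]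
      nlinarith [e0, e1, hr]
    exact Subtype.ext (hsep _ γ.2 _ γ'.2 hdist)
  set g : ℤ × ℤ → ℝ := fun z => Real.exp (c * s) * (u z.1 * v z.2) with hg
  have hle : ∀ γ : 𝔇, Real.exp (-c * ‖x - (γ : R2)‖) ≤ g (φ γ) := by
    intro γ
    have hx0 : |x 0 - (γ : R2) 0| ≤ ‖x - (γ : R2)‖ := by
      have h := aux_coord_le (x - (γ : R2)) 0
      simpa [PiLp.sub_apply] using h
    have hx1 : |x 1 - (γ : R2) 1| ≤ ‖x - (γ : R2)‖ := by
      have h := aux_coord_le (x - (γ : R2)) 1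
      simpa [PiLp.sub_apply] using h
    have hfl0 := hfl ((γ : R2) 0)
    have hfl1 := hfl ((γ : R2) 1)
    have b0 : |x 0 - (⌊(γ : R2) 0 / s⌋ : ℝ) * s| ≤ ‖x - (γ : R2)‖ + s := by
      calc |x 0 - (⌊(γ : R2) 0 / s⌋ : ℝ) * s|
          ≤ |x 0 - (γ : R2) 0| + |(γ : R2) 0 - (⌊(γ : R2) 0 / s⌋ : ℝ) * s| :=
            abs_sub_le _ _ _
        _ ≤ ‖x - (γ : R2)‖ + s := by
            rw [abs_of_nonneg hfl0.1]
            exact add_le_add hx0 hfl0.2.le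
    have b1 : |x 1 - (⌊(γ : R2) 1 / s⌋ : ℝ) * s| ≤ ‖x - (γ : R2)‖ + s := by
      calc |x 1 - (⌊(γ : R2) 1 / s⌋ : ℝ) * s|
          ≤ |x 1 - (γ : R2) 1| + |(γ : R2) 1 - (⌊(γ : R2) 1 / s⌋ : ℝ) * s| :=
            abs_sub_le _ _ _
        _ ≤ ‖x - (γ : R2)‖ + s := by
            rw [abs_of_nonneg hfl1.1]
            exact add_le_add hx1 hfl1.2.le
    show Real.exp (-c * ‖x - (γ : R2)‖) ≤
      Real.exp (c * s) * (Real.exp (-(c / 2) * |x 0 - (⌊(γ : R2) 0 / s⌋ : ℝ) * s|) *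
        Real.exp (-(c / 2) * |x 1 - (⌊(γ : R2) 1 / s⌋ : ℝ) * s|))
    rw [← Real.exp_add, ← Real.exp_add]
    apply Real.exp_le_exp.2
    have m0 := mul_le_mul_of_nonneg_left b0 (by positivity : (0 : ℝ) ≤ c / 2)
    have m1 := mul_le_mul_of_nonneg_left b1 (by positivity : (0 : ℝ) ≤ c / 2)
    linarith
  have huv : Summable (fun z : ℤ × ℤ => u z.1 * v z.2) :=
    hsu.mul_of_nonneg hsv (fun k => (Real.exp_pos _).le) (fun k => (Real.exp_pos _).le)
  have hgsum : Summable g := huv.mul_left _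
  have hfsum : Summable (fun γ : 𝔇 => Real.exp (-c * ‖x - (γ : R2)‖)) :=
    Summable.of_nonneg_of_le (fun γ => (Real.exp_pos _).le) hle (hgsum.comp_injective hφinj)
  refine ⟨hfsum, ?_⟩
  have h2 : ∑' γ : 𝔇, Real.exp (-c * ‖x - (γ : R2)‖) ≤ ∑' z : ℤ × ℤ, g z :=
    Summable.tsum_le_tsum_of_inj φ hφinj
      (fun z _ => le_of_lt (mul_pos (Real.exp_pos _) (mul_pos (Real.exp_pos _) (Real.exp_pos _))))
      hle hfsum hgsum
  have h3 : ∑' z : ℤ × ℤ, g z = Real.exp (c * s) * ((∑' k, u k) * (∑' l, v l)) := by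
    rw [hg]
    calc ∑' z : ℤ × ℤ, Real.exp (c * s) * (u z.1 * v z.2)
        = Real.exp (c * s) * ∑' z : ℤ × ℤ, u z.1 * v z.2 := tsum_mul_left
      _ = Real.exp (c * s) * ((∑' k, u k) * (∑' l, v l)) := by
          congr 1
          rw [Summable.tsum_prod huv]
          calc ∑' k, ∑' l, u k * v l = ∑' k, u k * ∑' l, v l := by
                exact tsum_congr fun k => tsum_mul_left
            _ = (∑' k, u k) * (∑' l, v l) := tsum_mul_right
  refine h2.trans ?_
  rw [h3]
  apply mul_le_mul_of_nonneg_left _ (Real.exp_pos _).le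
  exact mul_le_mul htu htv (tsum_nonneg fun k => (Real.exp_pos _).le) hA₁pos.le

private lemma aux_chain (α A X Y Z : ℝ) (hα : 0 < α) (hA : 0 ≤ A) (hX : 0 ≤ X) (hY : 0 ≤ Y)
    (hZ : Z ≤ X + Y) :
    (A + X) * (Real.exp (-α * X) * Real.exp (-α * Y)) ≤
      (A + 4 / α) * (Real.exp (-(α / 2) * Z) * Real.exp (-(α / 4) * X)) := by
  have e1 : Real.exp (-α * X) * Real.exp (-α * Y) ≤
      Real.exp (-(α / 2) * Z) * Real.exp (-(α / 2) * X) := by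
    rw [← Real.exp_add, ← Real.exp_add]
    apply Real.exp_le_exp.2
    nlinarith
  have hx4 : X * Real.exp (-(α / 2) * X) ≤ (4 / α) * Real.exp (-(α / 4) * X) := by
    have h1 : α / 4 * X ≤ Real.exp (α / 4 * X) := by
      nlinarith [Real.add_one_le_exp (α / 4 * X)]
    have h2 : X ≤ 4 / α * Real.exp (α / 4 * X) := by
      rw [div_mul_eq_mul_div, le_div_iff₀ hα]
      nlinarith
    calc X * Real.exp (-(α / 2) * X)
        ≤ (4 / α * Real.exp (α / 4 * X)) * Real.exp (-(α / 2) * X) :=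
          mul_le_mul_of_nonneg_right h2 (Real.exp_pos _).le
      _ = (4 / α) * Real.exp (-(α / 4) * X) := by
          rw [mul_assoc, ← Real.exp_add]
          congr 2
          ring
  have ha : A * Real.exp (-(α / 2) * X) ≤ A * Real.exp (-(α / 4) * X) := by
    apply mul_le_mul_of_nonneg_left _ hA
    apply Real.exp_le_exp.2
    nlinarith
  calc (A + X) * (Real.exp (-α * X) * Real.exp (-α * Y))
      ≤ (A + X) * (Real.exp (-(α / 2) * Z) * Real.exp (-(α / 2) * X)) :=
        mul_le_mul_of_nonneg_left e1 (by linarith)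
    _ = Real.exp (-(α / 2) * Z) * (A * Real.exp (-(α / 2) * X) + X * Real.exp (-(α / 2) * X)) := by
        ring
    _ ≤ Real.exp (-(α / 2) * Z) * (A * Real.exp (-(α / 4) * X) + (4 / α) * Real.exp (-(α / 4) * X)) := by
        apply mul_le_mul_of_nonneg_left (add_le_add ha hx4) (Real.exp_pos _).le
    _ = (A + 4 / α) * (Real.exp (-(α / 2) * Z) * Real.exp (-(α / 4) * X)) := by ring

end AuxStatement7

/-- kernel estimate for the operators `Γ_i`, exponential case. For a GWB of an
exponentially localized projection, `G`-localized around an `r`-uniformly discrete set with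
`G(‖x‖) = e^{2α‖x‖}`, `α < β`, the series defining the kernel of `Γ_i` converges absolutely
and satisfies `|Γ_i(x,y)| ≤ C₀ e^{-β'‖x-y‖} + C₀' |x_i| e^{-β'‖x-y‖}` for some `0 < β' < α`. -/
theorem statement_7
    (P : H2 →L[ℂ] H2) (hP : IsOrthProj P)
    (p : R2 → R2 → ℂ) (C β : ℝ) (hp : IsExpLocKernel p C β) (hker : HasKernel P p)
    (𝔇 : Set R2) (r : ℝ) (h𝔇 : UnifDiscrete 𝔇 r)
    (α : ℝ) (hα0 : 0 < α) (hαβ : α < β)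
    (m : R2 → ℕ) (mStar : ℕ) (w : (γ : R2) → Fin (m γ) → H2) (M : ℝ)
    (hGWB : IsGWB P 𝔇 m mStar w (fun t => Real.exp (2 * α * t)) M)
    -- pointwise bound on the continuous representatives of the GWFs:
    (K : ℝ) (hK : 0 < K)
    (hptw : ∀ γ ∈ 𝔇, ∀ a, ∀ x : R2,
      ‖(w γ a : R2 → ℂ) x‖ ≤ K * Real.exp (-α * ‖x - γ‖))
    (i : Fin 2) :
    (∀ x y : R2, Summable (fun σ : WIdx 𝔇 m =>
      ‖(((σ.1 : R2) i : ℝ) : ℂ) * (w (σ.1 : R2) σ.2 : R2 → ℂ) x *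
        (starRingEnd ℂ) ((w (σ.1 : R2) σ.2 : R2 → ℂ) y)‖)) ∧
    ∃ β' C₀ C₀' : ℝ, 0 < β' ∧ β' < α ∧ 0 < C₀ ∧ 0 < C₀' ∧
      ∀ x y : R2,
        ‖∑' σ : WIdx 𝔇 m,
            (((σ.1 : R2) i : ℝ) : ℂ) * (w (σ.1 : R2) σ.2 : R2 → ℂ) x *
              (starRingEnd ℂ) ((w (σ.1 : R2) σ.2 : R2 → ℂ) y)‖
          ≤ C₀ * Real.exp (-β' * ‖x - y‖) + C₀' * |x i| * Real.exp (-β' * ‖x - y‖) := by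
  obtain ⟨hm, -, -, -, -⟩ := hGWB
  have hsep : ∀ γ ∈ 𝔇, ∀ γ' ∈ 𝔇, dist γ γ' < r → γ = γ' := by
    intro γ hγ γ' hγ' hd
    exact h𝔇.2 γ' ⟨hγ, Metric.mem_ball.2 hd⟩
      ⟨hγ', Metric.mem_ball.2 (by simpa using h𝔇.1)⟩
  obtain ⟨A, hApos, hA⟩ := aux_grid (α / 4) r (by positivity) h𝔇.1 𝔇 hsep
  -- pointwise bound on each term of the series
  have hterm : ∀ x y : R2, ∀ σ : WIdx 𝔇 m,
      ‖(((σ.1 : R2) i : ℝ) : ℂ) * (w (σ.1 : R2) σ.2 : R2 → ℂ) x *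
        (starRingEnd ℂ) ((w (σ.1 : R2) σ.2 : R2 → ℂ) y)‖ ≤
      K ^ 2 * (|x i| + 4 / α) * Real.exp (-(α / 2) * ‖x - y‖) *
        Real.exp (-(α / 4) * ‖x - (σ.1 : R2)‖) := by
    intro x y σ
    obtain ⟨⟨γ, hγ⟩, a⟩ := σ
    simp only [norm_mul, Complex.norm_real, Real.norm_eq_abs, RCLike.norm_conj]
    have hwx := hptw γ hγ a x
    have hwy := hptw γ hγ a y
    have hZ : ‖x - y‖ ≤ ‖x - γ‖ + ‖y - γ‖ := by
      calc ‖x - y‖ = ‖(x - γ) + (γ - y)‖ := by rw [sub_add_sub_cancel]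
        _ ≤ ‖x - γ‖ + ‖γ - y‖ := norm_add_le _ _
        _ = ‖x - γ‖ + ‖y - γ‖ := by rw [norm_sub_rev γ y]
    have hγi : |γ i| ≤ |x i| + ‖x - γ‖ := by
      have h1 : |x i - γ i| ≤ ‖x - γ‖ := by
        have h := aux_coord_le (x - γ) i
        simpa [PiLp.sub_apply] using h
      calc |γ i| = |x i - (x i - γ i)| := by congr 1; ring
        _ ≤ |x i| + |x i - γ i| := abs_sub _ _
        _ ≤ |x i| + ‖x - γ‖ := by linarith
    calc |γ i| * ‖(w γ a : R2 → ℂ) x‖ * ‖(w γ a : R2 → ℂ) y‖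
        ≤ (|x i| + ‖x - γ‖) * (K * Real.exp (-α * ‖x - γ‖)) * (K * Real.exp (-α * ‖y - γ‖)) := by
          apply mul_le_mul _ hwy (norm_nonneg _) (by positivity)
          exact mul_le_mul hγi hwx (norm_nonneg _) (by positivity)
      _ = K ^ 2 * ((|x i| + ‖x - γ‖) * (Real.exp (-α * ‖x - γ‖) * Real.exp (-α * ‖y - γ‖))) := by
          ring
      _ ≤ K ^ 2 * ((|x i| + 4 / α) *
            (Real.exp (-(α / 2) * ‖x - y‖) * Real.exp (-(α / 4) * ‖x - γ‖))) := by
          apply mul_le_mul_of_nonneg_left _ (by positivity)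
          exact aux_chain α (|x i|) ‖x - γ‖ ‖y - γ‖ ‖x - y‖ hα0 (abs_nonneg _)
            (norm_nonneg _) (norm_nonneg _) hZ
      _ = K ^ 2 * (|x i| + 4 / α) * Real.exp (-(α / 2) * ‖x - y‖) *
            Real.exp (-(α / 4) * ‖x - γ‖) := by ring
  -- summability and tsum bound, for each x, y
  have haux : ∀ x y : R2,
      Summable (fun σ : WIdx 𝔇 m =>
        ‖(((σ.1 : R2) i : ℝ) : ℂ) * (w (σ.1 : R2) σ.2 : R2 → ℂ) x *
          (starRingEnd ℂ) ((w (σ.1 : R2) σ.2 : R2 → ℂ) y)‖) ∧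
      ∑' σ : WIdx 𝔇 m,
        ‖(((σ.1 : R2) i : ℝ) : ℂ) * (w (σ.1 : R2) σ.2 : R2 → ℂ) x *
          (starRingEnd ℂ) ((w (σ.1 : R2) σ.2 : R2 → ℂ) y)‖ ≤
      K ^ 2 * (|x i| + 4 / α) * Real.exp (-(α / 2) * ‖x - y‖) * ((mStar : ℝ) * A) := by
    intro x y
    set c₁ : ℝ := K ^ 2 * (|x i| + 4 / α) * Real.exp (-(α / 2) * ‖x - y‖) with hc₁
    have hc₁0 : 0 ≤ c₁ := by positivity
    set gD : 𝔇 → ℝ := fun γ => Real.exp (-(α / 4) * ‖x - (γ : R2)‖) with hgD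
    have hgD0 : ∀ γ, 0 ≤ gD γ := fun γ => (Real.exp_pos _).le
    have hsgD : Summable gD := (hA x).1
    have he : (fun γ : 𝔇 => ∑' _a : Fin (m (γ : R2)), gD γ) =
        fun γ : 𝔇 => (m (γ : R2) : ℝ) * gD γ := by
      funext γ
      rw [tsum_fintype]
      simp [Finset.sum_const, Finset.card_univ]
    have hsum1 : Summable (fun γ : 𝔇 => (m (γ : R2) : ℝ) * gD γ) := by
      apply Summable.of_nonneg_of_le (fun γ => mul_nonneg (Nat.cast_nonneg _) (hgD0 γ))
        (fun γ => ?_) (hsgD.mul_left (mStar : ℝ))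
      exact mul_le_mul_of_nonneg_right (Nat.cast_le.2 (hm _ γ.2)) (hgD0 γ)
    have hσsum : Summable (fun σ : WIdx 𝔇 m => gD σ.1) := by
      apply (summable_sigma_of_nonneg fun σ => hgD0 σ.1).2
      exact ⟨fun γ => (hasSum_fintype _).summable, by rw [he]; exact hsum1⟩
    have hGsum : Summable (fun σ : WIdx 𝔇 m => c₁ * gD σ.1) := hσsum.mul_left _
    have hFle : ∀ σ : WIdx 𝔇 m,
        ‖(((σ.1 : R2) i : ℝ) : ℂ) * (w (σ.1 : R2) σ.2 : R2 → ℂ) x *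
          (starRingEnd ℂ) ((w (σ.1 : R2) σ.2 : R2 → ℂ) y)‖ ≤ c₁ * gD σ.1 :=
      fun σ => hterm x y σ
    have hFsum : Summable (fun σ : WIdx 𝔇 m =>
        ‖(((σ.1 : R2) i : ℝ) : ℂ) * (w (σ.1 : R2) σ.2 : R2 → ℂ) x *
          (starRingEnd ℂ) ((w (σ.1 : R2) σ.2 : R2 → ℂ) y)‖) :=
      Summable.of_nonneg_of_le (fun σ => norm_nonneg _) hFle hGsum
    refine ⟨hFsum, ?_⟩
    calc ∑' σ : WIdx 𝔇 m,
          ‖(((σ.1 : R2) i : ℝ) : ℂ) * (w (σ.1 : R2) σ.2 : R2 → ℂ) x *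
            (starRingEnd ℂ) ((w (σ.1 : R2) σ.2 : R2 → ℂ) y)‖
        ≤ ∑' σ : WIdx 𝔇 m, c₁ * gD σ.1 := Summable.tsum_le_tsum hFle hFsum hGsum
      _ = c₁ * ∑' σ : WIdx 𝔇 m, gD σ.1 := tsum_mul_left
      _ ≤ c₁ * ((mStar : ℝ) * A) := by
          apply mul_le_mul_of_nonneg_left _ hc₁0
          have h1 : ∑' σ : WIdx 𝔇 m, gD σ.1 = ∑' γ : 𝔇, ∑' _a : Fin (m (γ : R2)), gD γ :=
            Summable.tsum_sigma hσsum
          rw [h1, he]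
          calc ∑' γ : 𝔇, (m (γ : R2) : ℝ) * gD γ
              ≤ ∑' γ : 𝔇, (mStar : ℝ) * gD γ :=
                Summable.tsum_le_tsum
                  (fun γ => mul_le_mul_of_nonneg_right (Nat.cast_le.2 (hm _ γ.2)) (hgD0 γ))
                  hsum1 (hsgD.mul_left _)
            _ = (mStar : ℝ) * ∑' γ : 𝔇, gD γ := tsum_mul_left
            _ ≤ (mStar : ℝ) * A :=
                mul_le_mul_of_nonneg_left (hA x).2 (Nat.cast_nonneg _)
  refine ⟨fun x y => (haux x y).1,
    α / 2, ((mStar : ℝ) + 1) * K ^ 2 * A * (4 / α), ((mStar : ℝ) + 1) * K ^ 2 * A,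
    by positivity, by linarith, by positivity, by positivity, fun x y => ?_⟩
  have hsum := (haux x y).1
  have hbound := (haux x y).2
  calc ‖∑' σ : WIdx 𝔇 m,
        (((σ.1 : R2) i : ℝ) : ℂ) * (w (σ.1 : R2) σ.2 : R2 → ℂ) x *
          (starRingEnd ℂ) ((w (σ.1 : R2) σ.2 : R2 → ℂ) y)‖
      = ‖∑' σ : WIdx 𝔇 m,
          (((σ.1 : R2) i : ℝ) : ℂ) * (w (σ.1 : R2) σ.2 : R2 → ℂ) x *
            (starRingEnd ℂ) ((w (σ.1 : R2) σ.2 : R2 → ℂ) y)‖ := rfl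
    _ ≤ ∑' σ : WIdx 𝔇 m,
          ‖(((σ.1 : R2) i : ℝ) : ℂ) * (w (σ.1 : R2) σ.2 : R2 → ℂ) x *
            (starRingEnd ℂ) ((w (σ.1 : R2) σ.2 : R2 → ℂ) y)‖ := by
        apply norm_tsum_le_tsum_norm
        exact hsum
    _ = ∑' σ : WIdx 𝔇 m,
          ‖(((σ.1 : R2) i : ℝ) : ℂ) * (w (σ.1 : R2) σ.2 : R2 → ℂ) x *
            (starRingEnd ℂ) ((w (σ.1 : R2) σ.2 : R2 → ℂ) y)‖ :=
        tsum_congr fun σ => rfl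
    _ ≤ K ^ 2 * (|x i| + 4 / α) * Real.exp (-(α / 2) * ‖x - y‖) * ((mStar : ℝ) * A) := hbound
    _ ≤ ((mStar : ℝ) + 1) * K ^ 2 * A * (4 / α) * Real.exp (-(α / 2) * ‖x - y‖) +
          ((mStar : ℝ) + 1) * K ^ 2 * A * |x i| * Real.exp (-(α / 2) * ‖x - y‖) := by
        have p1 : 0 ≤ K ^ 2 * A * (4 / α) * Real.exp (-(α / 2) * ‖x - y‖) := by positivity
        have p2 : 0 ≤ K ^ 2 * A * |x i| * Real.exp (-(α / 2) * ‖x - y‖) := by positivity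
        nlinarith [p1, p2]

end
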